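/- Let h be an n×n complex matrix and regard the simple Lindblad generator D_h as a ℂ-linear endomorphism of the space of n×n complex matrices. Then every eigenvalue λ of D_h satisfies Re λ ≤ 0. -/

import Mathlib

open Matrix

/-- The simple Lindblad generator `D_h`. -/
noncomputable def lindblad {n : ℕ} (h ρ : Matrix (Fin n) (Fin n) ℂ) :
    Matrix (Fin n) (Fin n) ℂ :=
  h * ρ * hᴴ - (1 / 2 : ℂ) • (hᴴ * h * ρ + ρ * (hᴴ * h))

namespace LindbladAux

open scoped ComplexOrder

variable {n : ℕ}

/-- Move a matrix across the star in a dot product. -/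
lemma dp_move (A : Matrix (Fin n) (Fin n) ℂ) (u y : Fin n → ℂ) :
    star (A *ᵥ u) ⬝ᵥ y = star u ⬝ᵥ (Aᴴ *ᵥ y) := by
  rw [star_mulVec, dotProduct_mulVec]

/-- Squared euclidean norm of a complex vector. -/
noncomputable def N (v : Fin n → ℂ) : ℝ := ∑ i, Complex.normSq (v i)

lemma N_nonneg (v : Fin n → ℂ) : 0 ≤ N v :=
  Finset.sum_nonneg fun _ _ => Complex.normSq_nonneg _

lemma dp_self (v : Fin n → ℂ) : star v ⬝ᵥ v = ((N v : ℝ) : ℂ) := by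
  simp only [dotProduct, Pi.star_apply, N]
  push_cast
  exact Finset.sum_congr rfl fun i _ => by
    simp [Complex.mul_conj, mul_comm]

lemma N_eq_zero {v : Fin n → ℂ} (hv : N v = 0) : v = 0 := by
  have : star v ⬝ᵥ v = 0 := by rw [dp_self, hv]; simp
  exact dotProduct_star_self_eq_zero.mp this

lemma dp_self_re (v : Fin n → ℂ) : (star v ⬝ᵥ v).re = N v := by
  rw [dp_self]; simp

/-- Cauchy-Schwarz / AM-GM combination. -/
lemma cauchy_amgm (t y : Fin n → ℂ) (r : ℝ) :
    2 * r * (star t ⬝ᵥ y).re ≤ N y + r ^ 2 * N t := by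
  have h0 : 0 ≤ N (y - (r : ℂ) • t) := N_nonneg _
  have hre : (star t ⬝ᵥ y).re = ∑ i, (y i * (starRingEnd ℂ) (t i)).re := by
    rw [dotProduct]
    rw [Complex.re_sum]
    exact Finset.sum_congr rfl fun i _ => by
      rw [Pi.star_apply]
      rw [mul_comm]
      rfl
  have hexp : N (y - (r : ℂ) • t)
      = N y + r ^ 2 * N t - 2 * r * ∑ i, (y i * (starRingEnd ℂ) (t i)).re := by
    unfold N
    rw [Finset.mul_sum, Finset.mul_sum, ← Finset.sum_add_distrib, ← Finset.sum_sub_distrib]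
    refine Finset.sum_congr rfl fun i _ => ?_
    have : (y - (r : ℂ) • t) i = y i - (r : ℂ) * t i := rfl
    rw [this, Complex.normSq_sub]
    have h1 : Complex.normSq ((r : ℂ) * t i) = r ^ 2 * Complex.normSq (t i) := by
      rw [Complex.normSq_mul, Complex.normSq_ofReal]; ring
    have h2 : (y i * (starRingEnd ℂ) ((r : ℂ) * t i)).re
        = r * (y i * (starRingEnd ℂ) (t i)).re := by
      rw [_root_.map_mul, Complex.conj_ofReal]
      have : y i * ((r : ℂ) * (starRingEnd ℂ) (t i)) = (r : ℂ) * (y i * (starRingEnd ℂ) (t i)) := by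
        ring
      rw [this, Complex.re_ofReal_mul]
    rw [h1, h2]; ring
  rw [hre]
  rw [hexp] at h0
  linarith

/-- The Rayleigh-quotient bound for a hermitian matrix. -/
lemma rayleigh {P : Matrix (Fin n) (Fin n) ℂ} (hP : P.IsHermitian) (μ : ℝ)
    (hμ : ∀ i, hP.eigenvalues i ≤ μ) (z : Fin n → ℂ) :
    (star z ⬝ᵥ (P *ᵥ z)).re ≤ μ * N z := by
  set U := (hP.eigenvectorUnitary : Matrix (Fin n) (Fin n) ℂ) with hUdef
  have hUU : U * star U = 1 := mem_unitaryGroup_iff.mp hP.eigenvectorUnitary.2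
  set y := star U *ᵥ z with hy
  set D := diagonal ((RCLike.ofReal : ℝ → ℂ) ∘ hP.eigenvalues) with hD
  have key : ∀ w : Fin n → ℂ, star z ⬝ᵥ (U *ᵥ w) = star y ⬝ᵥ w := by
    intro w
    have hmv : star (star U *ᵥ z) ⬝ᵥ w = star z ⬝ᵥ ((star U)ᴴ *ᵥ w) := dp_move _ _ _
    rw [hy, hmv, star_eq_conjTranspose, conjTranspose_conjTranspose]
  have h1 : star z ⬝ᵥ (P *ᵥ z) = star y ⬝ᵥ (D *ᵥ y) := by
    conv_lhs => rw [hP.spectral_theorem, Unitary.conjStarAlgAut_apply]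
    rw [← hUdef, ← hD, Matrix.mul_assoc, ← mulVec_mulVec, ← mulVec_mulVec, ← hy, key]
  have h2 : star y ⬝ᵥ y = star z ⬝ᵥ z :=
    calc star y ⬝ᵥ y = star z ⬝ᵥ (U *ᵥ y) := (key y).symm
      _ = star z ⬝ᵥ z := by rw [hy, mulVec_mulVec, hUU, one_mulVec]
  have h3 : (star y ⬝ᵥ (D *ᵥ y)).re = ∑ i, hP.eigenvalues i * Complex.normSq (y i) := by
    rw [hD, dotProduct]
    rw [Complex.re_sum]
    refine Finset.sum_congr rfl fun i _ => ?_
    simp only [mulVec_diagonal, Pi.star_apply, Function.comp_apply]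
    have e : (RCLike.ofReal (hP.eigenvalues i) : ℂ) = ((hP.eigenvalues i : ℝ) : ℂ) := rfl
    rw [e, Complex.star_def]
    have e2 : (starRingEnd ℂ) (y i) * (((hP.eigenvalues i : ℝ) : ℂ) * y i)
        = ((hP.eigenvalues i : ℝ) : ℂ) * (y i * (starRingEnd ℂ) (y i)) := by ring
    rw [e2, Complex.mul_conj, ← Complex.ofReal_mul, Complex.ofReal_re]
  have h4 : N y = N z := by
    have := congrArg Complex.re h2
    rw [dp_self_re, dp_self_re] at this
    exact this
  rw [h1, h3]
  calc ∑ i, hP.eigenvalues i * Complex.normSq (y i)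
      ≤ ∑ i, μ * Complex.normSq (y i) :=
        Finset.sum_le_sum fun i _ =>
          mul_le_mul_of_nonneg_right (hμ i) (Complex.normSq_nonneg _)
    _ = μ * N y := by rw [N, Finset.mul_sum]
    _ = μ * N z := by rw [h4]

end LindbladAux

open LindbladAux in
open scoped ComplexOrder in
/-- Every eigenvalue of the simple Lindblad generator `D_h`, viewed as a `ℂ`-linear
endomorphism of the matrices, has nonpositive real part. -/
theorem stmt17 {n : ℕ} (h : Matrix (Fin n) (Fin n) ℂ) (l : ℂ)
    (σ : Matrix (Fin n) (Fin n) ℂ) (hσ : σ ≠ 0) (heig : lindblad h σ = l • σ) :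
    l.re ≤ 0 := by
  classical
  -- notation
  set K : Matrix (Fin n) (Fin n) ℂ := hᴴ * h with hK
  have hKH : Kᴴ = K := by rw [hK, conjTranspose_mul, conjTranspose_conjTranspose]
  set lc : ℂ := (starRingEnd ℂ) l with hlc
  -- the adjoint (Heisenberg) generator, shifted by the conjugate eigenvalue
  set g : Matrix (Fin n) (Fin n) ℂ →ₗ[ℂ] Matrix (Fin n) (Fin n) ℂ :=
    (LinearMap.mulRight ℂ h).comp (LinearMap.mulLeft ℂ hᴴ)
      - (1 / 2 : ℂ) • (LinearMap.mulLeft ℂ K + LinearMap.mulRight ℂ K)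
      - lc • LinearMap.id with hg
  have hgapp : ∀ B, g B = hᴴ * B * h - (1 / 2 : ℂ) • (K * B + B * K) - lc • B := by
    intro B
    simp [hg, LinearMap.mulRight_apply, LinearMap.mulLeft_apply]
  -- duality: trace pairing identity
  have pairing : ∀ B : Matrix (Fin n) (Fin n) ℂ,
      ((lindblad h σ - l • σ)ᴴ * B).trace = (σᴴ * g B).trace := by
    intro B
    rw [hgapp]
    unfold lindblad
    have e1 : (h * σ * hᴴ)ᴴ = h * σᴴ * hᴴ := by
      rw [conjTranspose_mul, conjTranspose_mul, conjTranspose_conjTranspose]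
      rw [Matrix.mul_assoc]
    have e2 : ((1 / 2 : ℂ) • (hᴴ * h * σ + σ * (hᴴ * h)))ᴴ
        = (1 / 2 : ℂ) • (σᴴ * K + K * σᴴ) := by
      rw [hK]
      simp only [conjTranspose_smul, conjTranspose_add, conjTranspose_mul,
        conjTranspose_conjTranspose, Matrix.mul_assoc]
      norm_num
    have e3 : (l • σ)ᴴ = lc • σᴴ := by rw [conjTranspose_smul, hlc]; rfl
    rw [conjTranspose_sub, conjTranspose_sub, e1, e2, e3]
    rw [Matrix.sub_mul, Matrix.sub_mul, Matrix.mul_sub, Matrix.mul_sub]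
    rw [trace_sub, trace_sub, trace_sub, trace_sub]
    congr 1
    · congr 1
      · -- trace (h * σᴴ * hᴴ * B) = trace (σᴴ * (hᴴ * B * h))
        rw [show h * σᴴ * hᴴ * B = h * (σᴴ * hᴴ * B) by
          simp only [Matrix.mul_assoc]]
        rw [trace_mul_comm]
        simp only [Matrix.mul_assoc]
      · -- halves
        rw [Matrix.smul_mul, Matrix.mul_smul, trace_smul, trace_smul]
        congr 1
        rw [Matrix.add_mul, Matrix.mul_add, trace_add, trace_add]
        congr 1
        · simp only [Matrix.mul_assoc]
        · rw [show K * σᴴ * B = K * (σᴴ * B) by simp only [Matrix.mul_assoc]]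
          rw [trace_mul_comm]
          simp only [Matrix.mul_assoc]
    · rw [Matrix.smul_mul, Matrix.mul_smul]
  -- trace (σᴴ * σ) ≠ 0
  have htr : (σᴴ * σ).trace ≠ 0 := by
    intro h0
    apply hσ
    have hdiag : ∀ j, (σᴴ * σ) j j = star (fun i => σ i j) ⬝ᵥ (fun i => σ i j) := by
      intro j
      simp [Matrix.mul_apply, dotProduct, conjTranspose_apply]
    have hnonneg : ∀ j ∈ Finset.univ, (0 : ℂ) ≤ (σᴴ * σ) j j := by
      intro j _
      rw [hdiag j, dp_self]
      exact_mod_cast N_nonneg _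
    have hz : ∀ j ∈ Finset.univ, (σᴴ * σ) j j = 0 := by
      simp only [Matrix.trace, Matrix.diag] at h0
      exact (Finset.sum_eq_zero_iff_of_nonneg hnonneg).mp h0
    ext i j
    have := hz j (Finset.mem_univ j)
    rw [hdiag j] at this
    have hcol := dotProduct_star_self_eq_zero.mp this
    have := congrFun hcol i
    simpa using this
  -- the adjoint generator has `lc` as eigenvalue
  have hginj : ¬ Function.Injective g := by
    intro hinj
    obtain ⟨B, hB⟩ := (LinearMap.injective_iff_surjective.mp hinj) σ
    have h0 : lindblad h σ - l • σ = 0 := by rw [heig]; simp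
    have := pairing B
    rw [h0] at this
    simp only [conjTranspose_zero, Matrix.zero_mul, trace_zero] at this
    rw [hB] at this
    exact htr this.symm
  obtain ⟨X, hXmem, hX0⟩ : ∃ X, g X = 0 ∧ X ≠ 0 := by
    rw [← LinearMap.ker_eq_bot] at hginj
    obtain ⟨X, hX1, hX2⟩ := Submodule.exists_mem_ne_zero_of_ne_bot hginj
    exact ⟨X, hX1, hX2⟩
  have hXeq : hᴴ * X * h - (1 / 2 : ℂ) • (K * X + X * K) = lc • X := by
    have h1 := hgapp X
    rw [hXmem] at h1
    have h2 := h1.symm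
    rwa [sub_eq_zero] at h2
  -- the space is nontrivial
  have hn : 0 < n := by
    rcases Nat.eq_zero_or_pos n with rfl | hn
    · exact absurd (by ext i j; exact i.elim0) hσ
    · exact hn
  have : Nonempty (Fin n) := Fin.pos_iff_nonempty.mp hn
  -- spectral data for P = Xᴴ * X
  set P : Matrix (Fin n) (Fin n) ℂ := Xᴴ * X with hPdef
  have hPH : P.IsHermitian := isHermitian_conjTranspose_mul_self X
  obtain ⟨k, -, hk⟩ := Finset.exists_max_image Finset.univ hPH.eigenvalues
    Finset.univ_nonempty
  have hk' : ∀ i, hPH.eigenvalues i ≤ hPH.eigenvalues k := fun i => hk i (Finset.mem_univ i)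
  set μ : ℝ := hPH.eigenvalues k with hμdef
  set u : Fin n → ℂ := ⇑(hPH.eigenvectorBasis k) with hudef
  have hueq : P *ᵥ u = (μ : ℂ) • u := by
    have := hPH.mulVec_eigenvectorBasis k
    rw [← hudef, ← hμdef] at this
    rw [this]
    funext i
    simp [Complex.real_smul]
  have hu0 : u ≠ 0 := by
    intro hzero
    apply hPH.eigenvectorBasis.orthonormal.ne_zero k
    ext i
    exact congrFun hzero i
  have hNu : 0 < N u := by
    rcases lt_or_eq_of_le (N_nonneg u) with hlt | heq
    · exact hlt
    · exact absurd (N_eq_zero heq.symm) hu0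
  have dpXX : ∀ z : Fin n → ℂ, star (X *ᵥ z) ⬝ᵥ (X *ᵥ z) = star z ⬝ᵥ (P *ᵥ z) := by
    intro z
    rw [dp_move, mulVec_mulVec]
  have hNX : ∀ z : Fin n → ℂ, N (X *ᵥ z) ≤ μ * N z := by
    intro z
    have := rayleigh hPH μ hk' z
    rw [← dpXX z, dp_self_re] at this
    exact this
  -- the top eigenvalue is positive
  have hμpos : 0 < μ := by
    by_contra hneg
    push_neg at hneg
    apply hX0
    have hz : ∀ z : Fin n → ℂ, X *ᵥ z = 0 := by
      intro z
      refine N_eq_zero (le_antisymm ?_ (N_nonneg _))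
      calc N (X *ᵥ z) ≤ μ * N z := hNX z
        _ ≤ 0 := mul_nonpos_of_nonpos_of_nonneg hneg (N_nonneg z)
    ext i j
    have := congrFun (hz (Pi.single j 1)) i
    rw [mulVec_single] at this
    simpa using this
  set r : ℝ := Real.sqrt μ with hrdef
  have hr : 0 < r := Real.sqrt_pos.mpr hμpos
  have hr2 : r ^ 2 = μ := Real.sq_sqrt hμpos.le
  have hrC : ((r : ℂ)) ≠ 0 := by exact_mod_cast hr.ne'
  set w : Fin n → ℂ := ((r : ℂ))⁻¹ • (X *ᵥ u) with hwdef
  have hXu : X *ᵥ u = (r : ℂ) • w := by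
    rw [hwdef, smul_smul, mul_inv_cancel₀ hrC, one_smul]
  have hXHw : Xᴴ *ᵥ w = (r : ℂ) • u := by
    rw [hwdef, mulVec_smul, mulVec_mulVec, ← hPdef, hueq, smul_smul]
    congr 1
    have : (μ : ℂ) = ((r : ℂ)) ^ 2 := by
      rw [← hr2]; push_cast; ring
    rw [this]
    field_simp
  -- the two image vectors
  set s : Fin n → ℂ := h *ᵥ u with hsdef
  set t : Fin n → ℂ := h *ᵥ w with htdef
  have dpK : ∀ v q : Fin n → ℂ, star v ⬝ᵥ (K *ᵥ q) = star (h *ᵥ v) ⬝ᵥ (h *ᵥ q) := by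
    intro v q
    rw [dp_move h v (h *ᵥ q), mulVec_mulVec, hK]
  -- norm of w
  have hNw : N w = N u := by
    have h1 : star w ⬝ᵥ w = ((N u : ℝ) : ℂ) := by
      rw [hwdef]
      rw [star_smul, smul_dotProduct, dotProduct_smul]
      rw [dpXX u, hueq, dotProduct_smul, dp_self]
      rw [star_inv₀, Complex.star_def, Complex.conj_ofReal]
      rw [smul_eq_mul, smul_eq_mul, smul_eq_mul]
      have : (μ : ℂ) = ((r : ℂ)) ^ 2 := by rw [← hr2]; push_cast; ring
      rw [this]
      field_simp
    have := congrArg Complex.re h1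
    rwa [dp_self_re, Complex.ofReal_re] at this
  -- pair the eigen-equation with w and u
  have mainEq : star t ⬝ᵥ (X *ᵥ s)
      - (1 / 2 : ℂ) * ((r : ℂ) * ((N t : ℝ) : ℂ) + (r : ℂ) * ((N s : ℝ) : ℂ))
      = lc * ((r : ℂ) * ((N w : ℝ) : ℂ)) := by
    have e := congrArg (fun M => star w ⬝ᵥ (M *ᵥ u)) hXeq
    simp only [sub_mulVec, add_mulVec, smul_mulVec, dotProduct_sub, dotProduct_add,
      dotProduct_smul, smul_eq_mul] at e
    have T1 : star w ⬝ᵥ ((hᴴ * X * h) *ᵥ u) = star t ⬝ᵥ (X *ᵥ s) := by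
      rw [← mulVec_mulVec, ← mulVec_mulVec, ← hsdef]
      rw [← dp_move h w (X *ᵥ s), ← htdef]
    have T2 : star w ⬝ᵥ ((K * X) *ᵥ u) = (r : ℂ) * ((N t : ℝ) : ℂ) := by
      rw [← mulVec_mulVec, hXu, mulVec_smul, dotProduct_smul, smul_eq_mul]
      rw [dpK w w, ← htdef, dp_self]
    have T3 : star w ⬝ᵥ ((X * K) *ᵥ u) = (r : ℂ) * ((N s : ℝ) : ℂ) := by
      rw [← mulVec_mulVec]
      have : star w ⬝ᵥ (X *ᵥ (K *ᵥ u)) = star (Xᴴ *ᵥ w) ⬝ᵥ (K *ᵥ u) := by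
        rw [dp_move Xᴴ w (K *ᵥ u), conjTranspose_conjTranspose]
      rw [this, hXHw, star_smul, smul_dotProduct, Complex.star_def, Complex.conj_ofReal]
      rw [smul_eq_mul, dpK u u, ← hsdef, dp_self]
    have T4 : star w ⬝ᵥ (X *ᵥ u) = (r : ℂ) * ((N w : ℝ) : ℂ) := by
      rw [hXu, dotProduct_smul, smul_eq_mul, dp_self]
    rw [T1, T2, T3, T4] at e
    exact e
  -- take real parts
  have hre : (star t ⬝ᵥ (X *ᵥ s)).re - (1 / 2) * (r * N t + r * N s)
      = l.re * (r * N w) := by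
    have := congrArg Complex.re mainEq
    simp only [Complex.sub_re, Complex.mul_re, Complex.ofReal_re, Complex.ofReal_im,
      Complex.add_re, Complex.add_im, Complex.mul_im, Complex.one_re, Complex.one_im,
      Complex.div_re, Complex.div_im, hlc, Complex.conj_re, Complex.conj_im] at this
    norm_num at this
    linarith [this]
  -- Cauchy-Schwarz and the Rayleigh bound
  have hCS : 2 * r * (star t ⬝ᵥ (X *ᵥ s)).re ≤ N (X *ᵥ s) + r ^ 2 * N t :=
    cauchy_amgm t (X *ᵥ s) r
  have hRB : N (X *ᵥ s) ≤ r ^ 2 * N s := by rw [hr2]; exact hNX s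
  have hfinal : l.re * (r * N w) ≤ 0 := by nlinarith [hCS, hRB, hre, hr]
  have hpos : 0 < r * N w := by
    rw [hNw]
    exact mul_pos hr hNu
  by_contra hcon
  push_neg at hcon
  nlinarith [mul_pos hcon hpos]
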